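/- Let k ≥ 1, q a prime, n an integer with n^q ≡ 1 (mod k) and n ≢ 1 (mod k), and c = gcd(n-1, k). Then k ≡ c (mod q); in particular q divides k if and only if q divides c. -/

import Mathlib

open MulAction

/-- The kernel of multiplication by `m` on `ZMod k` has cardinality `gcd k m`. -/
lemma card_mul_ker (k m : ℕ) (hk : 0 < k) :
    Nat.card {x : ZMod k | (m : ZMod k) * x = 0} = Nat.gcd k m := by
  haveI : NeZero k := ⟨hk.ne'⟩
  set a : ZMod k := (m : ZMod k) with ha
  let f : ZMod k →+ ZMod k := AddMonoidHom.mulLeft a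
  have hker : {x : ZMod k | (m : ZMod k) * x = 0} = (f.ker : Set (ZMod k)) := by
    ext x
    simp [f, AddMonoidHom.mem_ker, AddMonoidHom.mulLeft, ha]
  have hrange : f.range = AddSubgroup.zmultiples a := by
    ext x
    constructor
    · rintro ⟨y, rfl⟩
      refine ⟨(y.val : ℤ), ?_⟩
      show (y.val : ℤ) • a = a * y
      rw [zsmul_eq_mul, mul_comm]
      push_cast
      rw [ZMod.natCast_val, ZMod.cast_id]
    · rintro ⟨z, rfl⟩
      exact ⟨(z : ZMod k), by show a * z = (z : ℤ) • a; rw [zsmul_eq_mul, mul_comm]⟩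
  have hcardrange : Nat.card f.range = k / Nat.gcd k m := by
    rw [hrange, Nat.card_zmultiples, ha, ZMod.addOrderOf_coe m hk.ne']
  have hquot : Nat.card (ZMod k ⧸ f.ker) = k / Nat.gcd k m := by
    rw [Nat.card_congr (QuotientAddGroup.quotientKerEquivRange f).toEquiv, hcardrange]
  have htot := AddSubgroup.card_eq_card_quotient_mul_card_addSubgroup f.ker
  rw [Nat.card_zmod, hquot] at htot
  have hg : Nat.gcd k m ∣ k := Nat.gcd_dvd_left k m
  have hgpos : 0 < Nat.gcd k m := Nat.gcd_pos_of_pos_left m hk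
  have hdpos : 0 < k / Nat.gcd k m := Nat.div_pos (Nat.le_of_dvd hk hg) hgpos
  have h2 : k / Nat.gcd k m * Nat.gcd k m = k := Nat.div_mul_cancel hg
  have := htot.symm.trans h2.symm
  have hcard : Nat.card ↥f.ker = Nat.gcd k m := Nat.eq_of_mul_eq_mul_left hdpos this
  rw [hker]
  exact hcard

theorem stmt_10 (k q : ℕ) (n : ℤ) (hk : 0 < k) (hq : q.Prime)
    (hnq : n ^ q ≡ 1 [ZMOD (k : ℤ)]) (hn1 : ¬ n ≡ 1 [ZMOD (k : ℤ)]) :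
    (k : ℤ) ≡ (Int.gcd (n - 1) (k : ℤ) : ℤ) [ZMOD (q : ℤ)] ∧
    (q ∣ k ↔ q ∣ Int.gcd (n - 1) (k : ℤ)) := by
  haveI : NeZero k := ⟨hk.ne'⟩
  haveI : Fact q.Prime := ⟨hq⟩
  set N : ZMod k := ((n : ℤ) : ZMod k) with hN
  have hNq : N ^ q = 1 := by
    have := (ZMod.intCast_eq_intCast_iff _ _ _).mpr hnq
    push_cast at this
    simpa [hN] using this
  have hu : IsUnit N := by
    refine IsUnit.of_mul_eq_one (a := N) (N ^ (q - 1)) ?_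
    rw [← pow_succ', Nat.sub_add_cancel hq.pos]
    exact hNq
  set u : (ZMod k)ˣ := hu.unit with hudef
  have huval : (u : ZMod k) = N := hu.unit_spec
  have huq : u ^ q = 1 := by
    ext
    push_cast
    rw [huval, hNq]
  set G := Subgroup.zpowers u with hG
  have hpG : IsPGroup q G := by
    intro g
    obtain ⟨m, hm⟩ := g.2
    have h2 : (g : (ZMod k)ˣ) ^ q = 1 := by
      rw [← hm]
      show (u ^ m) ^ q = 1
      rw [← zpow_natCast, ← zpow_mul, mul_comm m (q : ℤ), zpow_mul, zpow_natCast, huq, one_zpow]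
    exact ⟨1, Subtype.ext (by simpa [pow_one] using h2)⟩
  have hfix : (fixedPoints G (ZMod k) : Set (ZMod k)) = {x : ZMod k | N * x = x} := by
    ext x
    constructor
    · intro hx
      have := hx (⟨u, Subgroup.mem_zpowers u⟩ : G)
      rw [← huval]
      exact this
    · intro hx g
      obtain ⟨m, hm⟩ := g.2
      show (g : (ZMod k)ˣ) • x = x
      rw [← hm]
      have hus : u ∈ stabilizer (ZMod k)ˣ x := by
        rw [mem_stabilizer_iff]
        show (u : ZMod k) * x = x
        rw [huval]; exact hx
      exact (stabilizer (ZMod k)ˣ x).zpow_mem hus m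
  have hmod := hpG.card_modEq_card_fixedPoints (ZMod k)
  rw [Nat.card_zmod] at hmod
  have hsetcard : Nat.card (fixedPoints G (ZMod k)) = Int.gcd (n - 1) (k : ℤ) := by
    have h1 : (fixedPoints G (ZMod k) : Set (ZMod k))
        = {x : ZMod k | ((n - 1).natAbs : ZMod k) * x = 0} := by
      rw [hfix]
      have hca : ((n - 1 : ℤ) : ZMod k) = (((n - 1).natAbs : ℕ) : ZMod k)
          ∨ ((n - 1 : ℤ) : ZMod k) = -(((n - 1).natAbs : ℕ) : ZMod k) := by
        rcases Int.natAbs_eq (n - 1) with h | h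
        · left; conv_lhs => rw [h]
          exact Int.cast_natCast _
        · right; conv_lhs => rw [h]
          rw [Int.cast_neg, Int.cast_natCast]
      have hcast : ∀ x : ZMod k, (((n - 1).natAbs : ZMod k) * x = 0)
          ↔ (((n - 1 : ℤ) : ZMod k) * x = 0) := by
        intro x
        rcases hca with h | h
        · rw [h]
        · rw [h, neg_mul, neg_eq_zero]
      ext x
      rw [Set.mem_setOf_eq, Set.mem_setOf_eq, hcast]
      have : ((n - 1 : ℤ) : ZMod k) = N - 1 := by push_cast [hN]; ring
      rw [this, sub_mul, one_mul, sub_eq_zero]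
    have := card_mul_ker k (n - 1).natAbs hk
    rw [show (fixedPoints G (ZMod k)) = {x : ZMod k | ((n - 1).natAbs : ZMod k) * x = 0} from h1]
    rw [this, Int.gcd]
    simp [Nat.gcd_comm]
  rw [hsetcard] at hmod
  constructor
  · exact Int.natCast_modEq_iff.mpr hmod
  · rw [← Nat.modEq_zero_iff_dvd, ← Nat.modEq_zero_iff_dvd]
    exact ⟨hmod.symm.trans, hmod.trans⟩
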